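/- Let Q be a positive definite quadratic form on a finite-dimensional real vector space V, let H be a Q-selfadjoint endomorphism with ‖H‖_Q ≤ 1, and let 0 < t ≤ 1. Then for every x ∈ V, Q(x) + t·Q(x, Hx) ≤ Q(x, exp(tH)x) ≤ Q(x) + t·Q(x, Hx) + t²·Q(Hx), with equality (in either inequality) if and only if Hx = 0. -/

import Mathlib

section aux
variable {V : Type*} [NormedAddCommGroup V] [NormedSpace ℝ V]
  (Q : V →ₗ[ℝ] V →ₗ[ℝ] ℝ)

lemma aux_nonneg (hpos : ∀ x : V, x ≠ 0 → 0 < Q x x) (u : V) : 0 ≤ Q u u := by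
  rcases eq_or_ne u 0 with h | h
  · simp [h]
  · exact (hpos u h).le

lemma aux_cs (hsymm : ∀ x y, Q x y = Q y x) (hpos : ∀ x : V, x ≠ 0 → 0 < Q x x) (u v : V) :
    (Q u v) ^ 2 ≤ Q u u * Q v v := by
  rcases eq_or_ne v 0 with h | h
  · simp [h]
  · have hv : 0 < Q v v := hpos v h
    have h0 : 0 ≤ Q (Q v v • u - Q u v • v) (Q v v • u - Q u v • v) :=
      aux_nonneg Q hpos _
    simp only [map_sub, map_smul, LinearMap.sub_apply, LinearMap.smul_apply,
      smul_eq_mul] at h0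
    have hs : Q u v = Q v u := hsymm u v
    rw [← hs] at h0
    nlinarith [h0, hv, mul_pos hv hv]

lemma aux_fact (n : ℕ) : 2 * 3 ^ n ≤ (n + 2).factorial := by
  induction n with
  | zero => simp [Nat.factorial]
  | succ n ih =>
    have h : (n + 3).factorial = (n + 3) * (n + 2).factorial := rfl
    calc 2 * 3 ^ (n + 1) = 3 * (2 * 3 ^ n) := by ring
    _ ≤ (n + 3) * (n + 2).factorial := Nat.mul_le_mul (by omega) ih
    _ = (n + 3).factorial := h.symm

end aux

set_option maxHeartbeats 1000000 in
set_option synthInstance.maxHeartbeats 400000 in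
theorem estimation_neighborhood
    {V : Type*} [NormedAddCommGroup V] [NormedSpace ℝ V] [FiniteDimensional ℝ V]
    (Q : V →ₗ[ℝ] V →ₗ[ℝ] ℝ)
    (hsymm : ∀ x y, Q x y = Q y x) (hpos : ∀ x : V, x ≠ 0 → 0 < Q x x)
    (H : V →L[ℝ] V)
    (hsa : ∀ x y, Q x (H y) = Q (H x) y)
    (hnorm : ∀ x, Q (H x) (H x) ≤ Q x x)
    (t : ℝ) (ht0 : 0 < t) (ht1 : t ≤ 1) (x : V) :
    (Q x x + t * Q x (H x) ≤ Q x (NormedSpace.exp (t • H) x) ∧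
      Q x (NormedSpace.exp (t • H) x) ≤ Q x x + t * Q x (H x) + t ^ 2 * Q (H x) (H x)) ∧
    (Q x (NormedSpace.exp (t • H) x) = Q x x + t * Q x (H x) ↔ H x = 0) ∧
    (Q x (NormedSpace.exp (t • H) x) =
        Q x x + t * Q x (H x) + t ^ 2 * Q (H x) (H x) ↔ H x = 0) := by
  have hQnn : ∀ u : V, 0 ≤ Q u u := aux_nonneg Q hpos
  have hcomm : ∀ (n : ℕ) (u : V), H ((H ^ n) u) = (H ^ n) (H u) := by
    intro n u
    rw [← ContinuousLinearMap.mul_apply, ← ContinuousLinearMap.mul_apply,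
      ← pow_succ', pow_succ]
  have hsaN : ∀ (n : ℕ) (u v : V), Q u ((H ^ n) v) = Q ((H ^ n) u) v := by
    intro n
    induction n with
    | zero => intro u v; simp
    | succ n ih =>
      intro u v
      rw [pow_succ, ContinuousLinearMap.mul_apply, ContinuousLinearMap.mul_apply,
        ih, hsa, hcomm]
  have hnormN : ∀ (n : ℕ) (u : V), Q ((H ^ n) u) ((H ^ n) u) ≤ Q u u := by
    intro n
    induction n with
    | zero => intro u; simp
    | succ n ih =>
      intro u
      have h1 : (H ^ (n + 1)) u = (H ^ n) (H u) := by
        rw [pow_succ, ContinuousLinearMap.mul_apply]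
      rw [h1]
      exact le_trans (ih (H u)) (hnorm u)
  have habs : ∀ (n : ℕ) (u : V), |Q u ((H ^ n) u)| ≤ Q u u := by
    intro n u
    have h1 : (Q u ((H ^ n) u)) ^ 2 ≤ Q u u * Q ((H ^ n) u) ((H ^ n) u) :=
      aux_cs Q hsymm hpos u _
    have h2 := hnormN n u
    have h3 := hQnn u
    rw [abs_le]
    constructor <;> nlinarith
  have heven : ∀ (k : ℕ) (u : V), Q u ((H ^ (2 * k)) u) = Q ((H ^ k) u) ((H ^ k) u) := by
    intro k u
    have h : (H ^ (2 * k)) u = (H ^ k) ((H ^ k) u) := by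
      rw [two_mul, pow_add, ContinuousLinearMap.mul_apply]
    rw [h, hsaN]
  set y := H x with hy
  set c : ℕ → ℝ := fun n => t ^ n / n.factorial * Q x ((H ^ n) x) with hc
  have hQxc : Continuous (Q x) := LinearMap.continuous_of_finiteDimensional (Q x)
  have hvs : Summable fun n : ℕ => (n.factorial : ℝ)⁻¹ • (t • H) ^ n :=
    NormedSpace.expSeries_summable' (𝕂 := ℝ) (t • H)
  have hvsum : Summable fun n : ℕ => (n.factorial : ℝ)⁻¹ • ((t • H) ^ n) x := by
    have h2 := ((ContinuousLinearMap.apply ℝ V x).summable hvs)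
    simpa using h2
  have hcval : ∀ n : ℕ, Q x ((n.factorial : ℝ)⁻¹ • ((t • H) ^ n) x) = c n := by
    intro n
    rw [smul_pow, ContinuousLinearMap.smul_apply, map_smul, map_smul,
      smul_eq_mul, smul_eq_mul]
    simp only [hc]
    ring
  have hcsum : Summable c := by
    have h := hvsum.map (⟨Q x, hQxc⟩ : V →L[ℝ] ℝ)
      (⟨Q x, hQxc⟩ : V →L[ℝ] ℝ).continuous
    exact h.congr fun n => hcval n
  have hexp : Q x (NormedSpace.exp (t • H) x) = ∑' n : ℕ, c n := by
    have h0 : NormedSpace.exp (t • H) x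
        = ∑' n : ℕ, (n.factorial : ℝ)⁻¹ • ((t • H) ^ n) x := by
      rw [NormedSpace.exp_eq_tsum ℝ]
      have h1 := (ContinuousLinearMap.apply ℝ V x).map_tsum hvs
      simpa using h1
    rw [h0]
    have hm := (⟨Q x, hQxc⟩ : V →L[ℝ] ℝ).map_tsum hvsum
    exact hm.trans (tsum_congr hcval)
  have hcsum1 : Summable fun n => c (n + 1) := (summable_nat_add_iff 1).mpr hcsum
  have hcsum2 : Summable fun n => c (n + 2) := (summable_nat_add_iff 2).mpr hcsum
  have hsplit : ∑' n : ℕ, c n = c 0 + c 1 + ∑' n : ℕ, c (n + 2) := by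
    rw [Summable.tsum_eq_zero_add hcsum, Summable.tsum_eq_zero_add hcsum1, ← add_assoc]
  have hc0 : c 0 = Q x x := by simp [hc]
  have hc1 : c 1 = t * Q x (H x) := by simp [hc]
  set R : ℝ := ∑' n : ℕ, c (n + 2) with hR
  have hmain : Q x (NormedSpace.exp (t • H) x) = Q x x + t * Q x (H x) + R := by
    rw [hexp, hsplit, hc0, hc1]
  have hkey : ∀ n : ℕ, Q x ((H ^ (n + 2)) x) = Q y ((H ^ n) y) := by
    intro n
    have h1 : (H ^ (n + 2)) x = H ((H ^ (n + 1)) x) := by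
      rw [pow_succ', ContinuousLinearMap.mul_apply]
    have h2 : (H ^ (n + 1)) x = (H ^ n) (H x) := by
      rw [pow_succ, ContinuousLinearMap.mul_apply]
    rw [h1, hsa, h2, hy]
  rcases eq_or_ne (H x) 0 with hy0 | hy0
  · -- case H x = 0
    have hR0 : R = 0 := by
      rw [hR]
      have h : ∀ n : ℕ, c (n + 2) = 0 := by
        intro n
        have := hkey n
        simp only [hc]
        rw [this, hy, hy0, map_zero]
        simp
      rw [tsum_congr h, tsum_zero]
    have hy0' : y = 0 := by rw [hy, hy0]
    rw [hmain, hR0, hy0']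
    simp [hy0]
  · -- case H x ≠ 0
    have hyy : 0 < Q y y := hpos y (by rwa [hy])
    have hc2 : ∀ n : ℕ, c (n + 2) = t ^ (n + 2) / (n + 2).factorial * Q y ((H ^ n) y) := by
      intro n
      simp only [hc]
      rw [hkey n]
    have hse : Summable fun k : ℕ => c (2 * k + 2) := by
      have hinj : Function.Injective (fun k : ℕ => 2 * k) := fun a b h => by
        have h' : 2 * a = 2 * b := h
        omega
      have := hcsum2.comp_injective hinj
      exact this
    have hso : Summable fun k : ℕ => c (2 * k + 1 + 2) := by
      have hinj : Function.Injective (fun k : ℕ => 2 * k + 1) := fun a b h => by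
        have h' : 2 * a + 1 = 2 * b + 1 := h
        omega
      have := hcsum2.comp_injective hinj
      exact this
    have hpair : R = ∑' k : ℕ, (c (2 * k + 2) + c (2 * k + 1 + 2)) := by
      have h1 := tsum_even_add_odd (f := fun n => c (n + 2)) hse hso
      rw [hR, ← h1, ← Summable.tsum_add hse hso]
    have hpair_nn : ∀ k : ℕ, 0 ≤ c (2 * k + 2) + c (2 * k + 1 + 2) := by
      intro k
      rw [hc2, hc2]
      set s := Q ((H ^ k) y) ((H ^ k) y) with hs
      have hsnn : 0 ≤ s := hQnn _
      have he : Q y ((H ^ (2 * k)) y) = s := heven k y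
      have ho : |Q y ((H ^ (2 * k + 1)) y)| ≤ s := by
        have h1 : Q y ((H ^ (2 * k + 1)) y) = Q ((H ^ k) y) (H ((H ^ k) y)) := by
          have h3 : (H ^ (2 * k + 1)) y = H ((H ^ (2 * k)) y) := by
            rw [pow_succ', ContinuousLinearMap.mul_apply]
          have h4 : (H ^ (2 * k)) y = (H ^ k) ((H ^ k) y) := by
            rw [two_mul, pow_add, ContinuousLinearMap.mul_apply]
          rw [h3, hsa, h4, hsaN, ← hcomm]
          exact hsymm _ _
        rw [h1]
        have hcs : (Q ((H ^ k) y) (H ((H ^ k) y))) ^ 2 ≤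
            Q ((H ^ k) y) ((H ^ k) y) * Q (H ((H ^ k) y)) (H ((H ^ k) y)) :=
          aux_cs Q hsymm hpos _ _
        have hnn := hnorm ((H ^ k) y)
        rw [abs_le]
        constructor <;> nlinarith
      have hA : (0:ℝ) < t ^ (2 * k + 2) / (2 * k + 2).factorial := by
        apply div_pos (pow_pos ht0 _)
        exact_mod_cast Nat.factorial_pos _
      have hB : t ^ (2 * k + 1 + 2) / (2 * k + 1 + 2).factorial ≤
          t ^ (2 * k + 2) / (2 * k + 2).factorial := by
        apply div_le_div₀ (pow_pos ht0 _).le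
        · exact pow_le_pow_of_le_one ht0.le ht1 (by omega)
        · exact_mod_cast Nat.factorial_pos _
        · exact_mod_cast Nat.factorial_le (by omega)
      have hB0 : (0:ℝ) ≤ t ^ (2 * k + 1 + 2) / (2 * k + 1 + 2).factorial := by positivity
      rw [he]
      have habs' := abs_le.mp ho
      nlinarith [habs'.1, habs'.2, hA, hB, hB0, hsnn]
    have e2 : c 2 = t ^ 2 / 2 * Q y y := by
      have h := hkey 0
      simp only [zero_add, pow_zero, ContinuousLinearMap.one_apply] at h
      simp only [hc]
      rw [show ((2:ℕ).factorial : ℝ) = 2 by norm_num [Nat.factorial], h]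
    have e3 : c 3 = t ^ 3 / 6 * Q y (H y) := by
      have h := hkey 1
      rw [pow_one] at h
      simp only [hc]
      rw [show ((3:ℕ).factorial : ℝ) = 6 by norm_num [Nat.factorial], h]
    have hpair0 : 0 < c 2 + c 3 := by
      rw [e2, e3]
      have ho := habs 1 y
      rw [pow_one] at ho
      have ho' := abs_le.mp ho
      have ht3 : t ^ 3 ≤ t ^ 2 := pow_le_pow_of_le_one ht0.le ht1 (by omega)
      nlinarith [ho'.1, hyy, pow_pos ht0 2, pow_pos ht0 3,
        mul_pos (pow_pos ht0 2) hyy]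
    have hRpos : 0 < R := by
      rw [hpair]
      exact Summable.tsum_pos (hse.add hso) hpair_nn 0 hpair0
    have hub : ∀ n : ℕ, c (n + 2) ≤ t ^ 2 * Q y y * ((1/2) * (1/3) ^ n) := by
      intro n
      rw [hc2]
      have h1 : Q y ((H ^ n) y) ≤ Q y y := (abs_le.mp (habs n y)).2
      have h2 : t ^ (n + 2) ≤ t ^ 2 := pow_le_pow_of_le_one ht0.le ht1 (by omega)
      have h4 : (0:ℝ) < (n + 2).factorial := by exact_mod_cast Nat.factorial_pos _
      have h5 : (1 : ℝ) / (n + 2).factorial ≤ (1/2) * (1/3) ^ n := by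
        rw [div_le_iff₀ h4]
        have h3 : (2 * 3 ^ n : ℝ) ≤ (n + 2).factorial := by exact_mod_cast aux_fact n
        calc (1:ℝ) = (1/2) * (1/3) ^ n * (2 * 3 ^ n) := by
              rw [one_div, one_div, inv_pow]
              field_simp
        _ ≤ (1/2) * (1/3) ^ n * (n + 2).factorial := by
              apply mul_le_mul_of_nonneg_left h3
              positivity
      calc t ^ (n + 2) / (n + 2).factorial * Q y ((H ^ n) y)
          ≤ t ^ (n + 2) / (n + 2).factorial * Q y y := by
            apply mul_le_mul_of_nonneg_left h1
            positivity
        _ ≤ t ^ 2 * ((1/2) * (1/3) ^ n) * Q y y := by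
            apply mul_le_mul_of_nonneg_right _ hyy.le
            rw [div_eq_mul_inv, ← one_div]
            exact mul_le_mul h2 h5 (by positivity) (by positivity)
        _ = t ^ 2 * Q y y * ((1/2) * (1/3) ^ n) := by ring
    have hgeo : Summable fun n : ℕ => t ^ 2 * Q y y * ((1/2) * (1/3:ℝ) ^ n) := by
      apply Summable.mul_left
      apply Summable.mul_left
      exact summable_geometric_of_lt_one (by norm_num) (by norm_num)
    have hRub : R ≤ t ^ 2 * Q y y * (3/4) := by
      have h1 : R ≤ ∑' n : ℕ, t ^ 2 * Q y y * ((1/2) * (1/3:ℝ) ^ n) :=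
        Summable.tsum_le_tsum hub hcsum2 hgeo
      have h2 : ∑' n : ℕ, t ^ 2 * Q y y * ((1/2) * (1/3:ℝ) ^ n) =
          t ^ 2 * Q y y * (3/4) := by
        rw [tsum_mul_left, tsum_mul_left,
          tsum_geometric_of_lt_one (by norm_num) (by norm_num)]
        norm_num
      linarith
    have hRlt : R < t ^ 2 * Q y y := by
      have hpos2 : 0 < t ^ 2 * Q y y := mul_pos (pow_pos ht0 2) hyy
      nlinarith
    refine ⟨⟨by rw [hmain]; linarith, by rw [hmain]; linarith⟩, ?_, ?_⟩
    · constructor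
      · intro h; exfalso; rw [hmain] at h; nlinarith
      · intro h; exact absurd h hy0
    · constructor
      · intro h; exfalso; rw [hmain] at h; nlinarith
      · intro h; exact absurd h hy0
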